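/- arXiv:1911.11501 — 3 statements merged into one kernel-verified Lean document; each statement's English description precedes it below -/
import Mathlib

section
/- Let A ⊆ ℝ^k be closed and convex, and for parameters θ, θ' let h_θ, h_{θ'} : A → ℝ be C¹ and λ-convex with λ > 0, with minimizers α̂ = argmin h_θ and α̂' = argmin h_{θ'} over A. Then |α̂ - α̂'| ≤ (2λ)^{-1} |∇h_θ(α̂) - ∇h_{θ'}(α̂)|. -/
open scoped RealInnerProductSpace

/-- Variational inequality at a minimizer of a λ-convex C¹ function. -/
lemma variational_ineq_aux {k : ℕ} {A : Set (EuclideanSpace ℝ (Fin k))}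
    (hA_convex : Convex ℝ A)
    {h : EuclideanSpace ℝ (Fin k) → ℝ} (hh : ContDiff ℝ 1 h)
    {lam : ℝ} (hlam : 0 < lam)
    (hconv : ∀ α ∈ A, ∀ α' ∈ A,
      lam * ‖α' - α‖ ^ 2 ≤ h α' - h α - ⟪α' - α, gradient h α⟫)
    {x y : EuclideanSpace ℝ (Fin k)} (hx : x ∈ A) (hy : y ∈ A)
    (hmin : ∀ b ∈ A, h x ≤ h b) :
    0 ≤ ⟪y - x, gradient h x⟫ := by
  have hg : Continuous (gradient h) := by
    have : gradient h = fun x => (InnerProductSpace.toDual ℝ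
        (EuclideanSpace ℝ (Fin k))).symm (fderiv ℝ h x) := rfl
    rw [this]
    exact (InnerProductSpace.toDual ℝ _).symm.continuous.comp (hh.continuous_fderiv one_ne_zero)
  set z : ℝ → EuclideanSpace ℝ (Fin k) := fun t => x + t • (y - x) with hz
  have hzA : ∀ t ∈ Set.Icc (0:ℝ) 1, z t ∈ A := fun t ht =>
    hA_convex.add_smul_sub_mem hx hy ht
  have key : ∀ t ∈ Set.Ioc (0:ℝ) 1, 0 ≤ ⟪y - x, gradient h (z t)⟫ := by
    intro t ht
    have hzt : z t ∈ A := hzA t ⟨le_of_lt ht.1, ht.2⟩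
    have h1 := hconv (z t) hzt x hx
    have h2 := hmin (z t) hzt
    have e1 : x - z t = (-t) • (y - x) := by
      simp only [hz]
      module
    rw [e1] at h1
    rw [real_inner_smul_left] at h1
    have e2 : ‖(-t) • (y - x)‖ ^ 2 = t ^ 2 * ‖y - x‖ ^ 2 := by
      rw [norm_smul]
      simp [mul_pow, sq_abs]
    rw [e2] at h1
    nlinarith [ht.1, sq_nonneg ‖y - x‖, mul_pos hlam ht.1]
  have hf : Continuous fun t : ℝ => ⟪y - x, gradient h (z t)⟫ := by
    apply Continuous.inner continuous_const
    exact hg.comp (continuous_const.add (continuous_id.smul continuous_const))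
  have hz0 : z 0 = x := by simp [hz]
  have htend : Filter.Tendsto (fun t : ℝ => ⟪y - x, gradient h (z t)⟫)
      (nhdsWithin 0 (Set.Ioi 0)) (nhds ⟪y - x, gradient h x⟫) := by
    have := (hf.tendsto 0).mono_left (nhdsWithin_le_nhds (s := Set.Ioi (0:ℝ)))
    simpa [hz0] using this
  refine ge_of_tendsto htend ?_
  filter_upwards [Ioc_mem_nhdsGT_of_mem (by simp : (0:ℝ) ∈ Set.Ico (0:ℝ) 1)] with t ht
  exact key t ht

/-- Stability of minimizers of λ-convex functions with respect to the parameter: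
`‖α̂ - α̂'‖ ≤ (2λ)⁻¹ ‖∇h_θ(α̂) - ∇h_θ'(α̂)‖`. -/
theorem dist_minimizers_le_gradient_diff {k : ℕ}
    (A : Set (EuclideanSpace ℝ (Fin k)))
    (hA_ne : A.Nonempty) (hA_closed : IsClosed A) (hA_convex : Convex ℝ A)
    (h h' : EuclideanSpace ℝ (Fin k) → ℝ)
    (hh : ContDiff ℝ 1 h) (hh' : ContDiff ℝ 1 h')
    (lam : ℝ) (hlam : 0 < lam)
    (hconv : ∀ α ∈ A, ∀ α' ∈ A,
      lam * ‖α' - α‖ ^ 2 ≤ h α' - h α - ⟪α' - α, gradient h α⟫)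
    (hconv' : ∀ α ∈ A, ∀ α' ∈ A,
      lam * ‖α' - α‖ ^ 2 ≤ h' α' - h' α - ⟪α' - α, gradient h' α⟫)
    (αhat αhat' : EuclideanSpace ℝ (Fin k))
    (hαhatA : αhat ∈ A) (hαhatA' : αhat' ∈ A)
    (hmin : ∀ b ∈ A, h αhat ≤ h b) (hmin' : ∀ b ∈ A, h' αhat' ≤ h' b) :
    ‖αhat - αhat'‖ ≤ (2 * lam)⁻¹ * ‖gradient h αhat - gradient h' αhat‖ := by
  set d := αhat' - αhat with hd
  have VI1 : 0 ≤ ⟪d, gradient h αhat⟫ :=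
    variational_ineq_aux hA_convex hh hlam hconv hαhatA hαhatA' hmin
  have VI2 : 0 ≤ ⟪αhat - αhat', gradient h' αhat'⟫ :=
    variational_ineq_aux hA_convex hh' hlam hconv' hαhatA' hαhatA hmin'
  have h1 := hconv' αhat hαhatA αhat' hαhatA'
  have h2 := hconv' αhat' hαhatA' αhat hαhatA
  have e1 : ‖αhat - αhat'‖ = ‖d‖ := by rw [hd, norm_sub_rev]
  rw [e1] at h2 ⊢
  have e2 : ⟪αhat - αhat', gradient h' αhat'⟫ = -⟪d, gradient h' αhat'⟫ := by
    rw [hd, ← neg_sub, inner_neg_left]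
  rw [e2] at h2 VI2
  -- strong monotonicity + VIs:
  have key : 2 * lam * ‖d‖ ^ 2 ≤ ⟪d, gradient h αhat - gradient h' αhat⟫ := by
    rw [inner_sub_right]
    linarith
  have hcs : ⟪d, gradient h αhat - gradient h' αhat⟫
      ≤ ‖d‖ * ‖gradient h αhat - gradient h' αhat‖ := real_inner_le_norm _ _
  rcases eq_or_lt_of_le (norm_nonneg d) with hz | hz
  · rw [← hz]
    positivity
  · have h2lam : (0:ℝ) < 2 * lam := by linarith
    rw [inv_mul_eq_div, le_div_iff₀ h2lam]
    nlinarith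
end

section
/- Let b ∈ ℝ^{d×k}, y, y' ∈ ℝ^d, and let f : ℝ^d × A → ℝ be C¹ in (x,α) with ∂_α f Lipschitz in x with constant L, and suppose the map α ↦ ⟨b α, y⟩ + f(x, α) is λ-convex on the closed convex set A ⊆ ℝ^k for every x. If α̂(x,y) denotes the unique minimizer over A of α ↦ ⟨bα, y⟩ + f(x,α), then |α̂(x,y) - α̂(x',y')| ≤ (2λ)^{-1}(|b||y - y'| + L|x - x'|), for all x, x' ∈ ℝ^d and y, y' ∈ ℝ^d. -/
open scoped RealInnerProductSpace

lemma inner_gradient_eq_fderiv {k : ℕ} (g : EuclideanSpace ℝ (Fin k) → ℝ)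
    (a v : EuclideanSpace ℝ (Fin k)) :
    ⟪gradient g a, v⟫ = fderiv ℝ g a v := by
  rw [gradient, ← InnerProductSpace.toDual_apply_apply, LinearIsometryEquiv.apply_symm_apply]

/-- Lipschitz continuity in `(x, y)` of the minimizer of the reduced Hamiltonian
`α ↦ ⟪bα, y⟫ + f(x, α)` over a closed convex set `A`. -/
theorem minimizer_lipschitz_in_x_y {d k : ℕ}
    (A : Set (EuclideanSpace ℝ (Fin k)))
    (hA_ne : A.Nonempty) (hA_closed : IsClosed A) (hA_convex : Convex ℝ A)
    (lam L : ℝ) (hlam : 0 < lam) (hL : 0 ≤ L)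
    (b : EuclideanSpace ℝ (Fin k) →L[ℝ] EuclideanSpace ℝ (Fin d))
    (f : EuclideanSpace ℝ (Fin d) → EuclideanSpace ℝ (Fin k) → ℝ)
    (hf_diff : ∀ x, ContDiff ℝ 1 (f x))
    (hf_lip : ∀ x x' α, ‖gradient (f x) α - gradient (f x') α‖ ≤ L * ‖x - x'‖)
    (H : EuclideanSpace ℝ (Fin d) → EuclideanSpace ℝ (Fin d) →
      EuclideanSpace ℝ (Fin k) → ℝ)
    (hH : ∀ x y α, H x y α = ⟪b α, y⟫ + f x α)
    (hconv : ∀ x y, ∀ α ∈ A, ∀ α' ∈ A,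
      lam * ‖α' - α‖ ^ 2 ≤ H x y α' - H x y α - ⟪α' - α, gradient (H x y) α⟫)
    (αhat : EuclideanSpace ℝ (Fin d) → EuclideanSpace ℝ (Fin d) →
      EuclideanSpace ℝ (Fin k))
    (hmem : ∀ x y, αhat x y ∈ A)
    (hmin : ∀ x y, ∀ β ∈ A, H x y (αhat x y) ≤ H x y β) :
    ∀ x x' y y', ‖αhat x y - αhat x' y'‖
      ≤ (2 * lam)⁻¹ * (‖b‖ * ‖y - y'‖ + L * ‖x - x'‖) := by
  have hHdiff : ∀ (x y : EuclideanSpace ℝ (Fin d)), Differentiable ℝ (H x y) := by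
    intro x y
    have heq : H x y = fun α => ⟪b α, y⟫ + f x α := funext (hH x y)
    rw [heq]
    exact ((b.differentiable.inner ℝ (differentiable_const _))).add
      ((hf_diff x).differentiable one_ne_zero)
  -- variational inequality
  have hVI : ∀ (x y : EuclideanSpace ℝ (Fin d)), ∀ β ∈ A,
      0 ≤ ⟪β - αhat x y, gradient (H x y) (αhat x y)⟫ := by
    intro x y β hβ
    have hmin' : IsMinOn (H x y) A (αhat x y) := fun z hz => hmin x y z hz
    have hcone : β - αhat x y ∈ posTangentConeAt A (αhat x y) :=
      sub_mem_posTangentConeAt_of_segment_subset (hA_convex.segment_subset (hmem x y) hβ)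
    have hfd : HasFDerivWithinAt (H x y) (fderiv ℝ (H x y) (αhat x y)) A (αhat x y) :=
      ((hHdiff x y (αhat x y)).hasFDerivAt).hasFDerivWithinAt
    have h := hmin'.localize.hasFDerivWithinAt_nonneg hfd hcone
    rw [real_inner_comm, inner_gradient_eq_fderiv]
    exact h
  intro x x' y y'
  set α := αhat x y with hα
  set α' := αhat x' y' with hα'
  set δ := α' - α with hδ
  -- strong convexity + VI at (x,y)
  have key1 : lam * ‖δ‖ ^ 2 ≤ H x y α' - H x y α := by
    have h1 := hconv x y α (hmem x y) α' (hmem x' y')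
    have h2 := hVI x y α' (hmem x' y')
    linarith
  have key2 : lam * ‖δ‖ ^ 2 ≤ H x' y' α - H x' y' α' := by
    have h1 := hconv x' y' α' (hmem x' y') α (hmem x y)
    have h2 := hVI x' y' α (hmem x y)
    have hnorm : ‖α - α'‖ = ‖δ‖ := by rw [hδ, norm_sub_rev]
    rw [hnorm] at h1
    linarith
  -- identity for the sum
  have hsum : H x y α' - H x y α + (H x' y' α - H x' y' α')
      = ⟪b δ, y - y'⟫ + ((f x α' - f x' α') - (f x α - f x' α)) := by
    simp only [hH, hδ, map_sub, inner_sub_left, inner_sub_right]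
    ring
  -- bound the inner product term
  have hinner : ⟪b δ, y - y'⟫ ≤ ‖b‖ * ‖y - y'‖ * ‖δ‖ := by
    calc ⟪b δ, y - y'⟫ ≤ ‖b δ‖ * ‖y - y'‖ := real_inner_le_norm _ _
      _ ≤ ‖b‖ * ‖δ‖ * ‖y - y'‖ := by
          exact mul_le_mul_of_nonneg_right (b.le_opNorm δ) (norm_nonneg _)
      _ = ‖b‖ * ‖y - y'‖ * ‖δ‖ := by ring
  -- mean value bound for g = f x - f x'
  have hg : (f x α' - f x' α') - (f x α - f x' α) ≤ L * ‖x - x'‖ * ‖δ‖ := by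
    set g : EuclideanSpace ℝ (Fin k) → ℝ := fun β => f x β - f x' β with hgdef
    have hgdiff : ∀ β, DifferentiableAt ℝ g β := fun β =>
      (((hf_diff x).differentiable one_ne_zero) β).sub (((hf_diff x').differentiable one_ne_zero) β)
    have hbound : ∀ β ∈ (Set.univ : Set (EuclideanSpace ℝ (Fin k))),
        ‖fderiv ℝ g β‖ ≤ L * ‖x - x'‖ := by
      intro β _
      have hfd : fderiv ℝ g β = fderiv ℝ (f x) β - fderiv ℝ (f x') β :=
        fderiv_sub (((hf_diff x).differentiable one_ne_zero) β)
          (((hf_diff x').differentiable one_ne_zero) β)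
      have : ‖fderiv ℝ (f x) β - fderiv ℝ (f x') β‖
          = ‖gradient (f x) β - gradient (f x') β‖ := by
        rw [gradient, gradient, ← map_sub, LinearIsometryEquiv.norm_map]
      rw [hfd, this]
      exact hf_lip x x' β
    have := Convex.norm_image_sub_le_of_norm_fderiv_le
      (fun β _ => hgdiff β) hbound convex_univ (Set.mem_univ α) (Set.mem_univ α')
    have habs : |g α' - g α| ≤ L * ‖x - x'‖ * ‖δ‖ := by
      rw [← Real.norm_eq_abs]
      simpa [hδ] using this
    calc (f x α' - f x' α') - (f x α - f x' α) = g α' - g α := by rw [hgdef]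
      _ ≤ |g α' - g α| := le_abs_self _
      _ ≤ L * ‖x - x'‖ * ‖δ‖ := habs
  -- combine
  have key : 2 * lam * ‖δ‖ ^ 2 ≤ (‖b‖ * ‖y - y'‖ + L * ‖x - x'‖) * ‖δ‖ := by
    have := hsum
    nlinarith [key1, key2, hinner, hg]
  have hgoal : ‖δ‖ ≤ (2 * lam)⁻¹ * (‖b‖ * ‖y - y'‖ + L * ‖x - x'‖) := by
    rcases eq_or_lt_of_le (norm_nonneg δ) with h0 | h0
    · rw [← h0]
      positivity
    · rw [inv_mul_eq_div, le_div_iff₀ (by linarith)]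
      have := mul_le_mul_of_nonneg_right key (le_of_lt (inv_pos.mpr h0))
      nlinarith
  have : ‖αhat x y - αhat x' y'‖ = ‖δ‖ := by rw [hδ, norm_sub_rev]
  rw [this]
  exact hgoal
end

section
/- The truncation operator μ ↦ φ_n ∘ μ, where φ_n ∘ μ is the push-forward of μ by x ↦ n x / max(M₂(μ), n), is continuous on (𝒫₂(ℝ^d), W₂): if W₂(μ_k, μ) → 0 then W₂(φ_n ∘ μ_k, φ_n ∘ μ) → 0. -/
open MeasureTheory Filter

/-- The 2-Wasserstein distance between probability measures on `ℝ^d`. -/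
noncomputable def W2 {d : ℕ}
    (μ ν : Measure (EuclideanSpace ℝ (Fin d))) : ℝ :=
  sInf { r : ℝ |
    ∃ π : Measure (EuclideanSpace ℝ (Fin d) × EuclideanSpace ℝ (Fin d)),
      IsProbabilityMeasure π ∧ π.map Prod.fst = μ ∧ π.map Prod.snd = ν ∧
      r = Real.sqrt (∫ p, ‖p.1 - p.2‖ ^ 2 ∂π) }

/-- The second moment `M₂(μ) = (∫ |x|² dμ)^{1/2}`. -/
noncomputable def M2 {d : ℕ} (μ : Measure (EuclideanSpace ℝ (Fin d))) : ℝ :=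
  Real.sqrt (∫ x, ‖x‖ ^ 2 ∂μ)

/-- The truncation `φ_n ∘ μ`: push-forward of `μ` by `x ↦ n x / max(M₂(μ), n)`. -/
noncomputable def phi {d : ℕ} (n : ℕ)
    (μ : Measure (EuclideanSpace ℝ (Fin d))) : Measure (EuclideanSpace ℝ (Fin d)) :=
  μ.map (fun x => ((n : ℝ) / max (M2 μ) (n : ℝ)) • x)

section Aux

variable {α : Type*} [MeasurableSpace α] {μ : Measure α}

/-- Cauchy–Schwarz style integrability of products. -/
lemma my_integrable_mul {f g : α → ℝ}
    (hf : Integrable (fun x => f x ^ 2) μ) (hg : Integrable (fun x => g x ^ 2) μ)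
    (hfm : AEStronglyMeasurable f μ) (hgm : AEStronglyMeasurable g μ) :
    Integrable (fun x => f x * g x) μ := by
  refine Integrable.mono' (((hf.add hg).div_const 2)) (hfm.mul hgm) ?_
  filter_upwards with x
  simp only [Pi.add_apply, Real.norm_eq_abs, abs_mul]
  have h := two_mul_le_add_sq (|f x|) (|g x|)
  simp only [sq_abs] at h
  nlinarith [abs_nonneg (f x), abs_nonneg (g x)]

/-- Integrability of `(f + g)²`. -/
lemma my_integrable_add_sq {f g : α → ℝ}
    (hf : Integrable (fun x => f x ^ 2) μ) (hg : Integrable (fun x => g x ^ 2) μ)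
    (hfm : AEStronglyMeasurable f μ) (hgm : AEStronglyMeasurable g μ) :
    Integrable (fun x => (f x + g x) ^ 2) μ := by
  refine Integrable.mono' ((hf.const_mul 2).add (hg.const_mul 2)) ?_ ?_
  · have : (fun x => (f x + g x) ^ 2) = fun x => (f x + g x) * (f x + g x) := by
      funext x; ring
    rw [this]
    exact (hfm.add hgm).mul (hfm.add hgm)
  · filter_upwards with x
    simp only [Pi.add_apply, Real.norm_eq_abs, abs_of_nonneg (sq_nonneg (f x + g x))]
    nlinarith [sq_nonneg (f x - g x)]

/-- Cauchy–Schwarz for integrals. -/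
lemma my_cauchy_schwarz {f g : α → ℝ} (hf0 : ∀ x, 0 ≤ f x) (hg0 : ∀ x, 0 ≤ g x)
    (hf : Integrable (fun x => f x ^ 2) μ) (hg : Integrable (fun x => g x ^ 2) μ)
    (hfm : AEStronglyMeasurable f μ) (hgm : AEStronglyMeasurable g μ) :
    ∫ x, f x * g x ∂μ ≤ Real.sqrt (∫ x, f x ^ 2 ∂μ) * Real.sqrt (∫ x, g x ^ 2 ∂μ) := by
  have h2 : (2:ℝ).HolderConjugate 2 := by constructor <;> norm_num
  have hfL : MemLp f (ENNReal.ofReal (2:ℝ)) μ := by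
    rw [show ENNReal.ofReal (2:ℝ) = 2 by norm_num]
    exact (memLp_two_iff_integrable_sq hfm).2 hf
  have hgL : MemLp g (ENNReal.ofReal (2:ℝ)) μ := by
    rw [show ENNReal.ofReal (2:ℝ) = 2 by norm_num]
    exact (memLp_two_iff_integrable_sq hgm).2 hg
  have := integral_mul_le_Lp_mul_Lq_of_nonneg h2
    (Filter.Eventually.of_forall hf0) (Filter.Eventually.of_forall hg0) hfL hgL
  have e1 : ∀ y : ℝ, y ^ (2:ℝ) = y ^ 2 := fun y => by
    rw [← Real.rpow_natCast y 2]; norm_num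
  simp only [e1] at this
  calc ∫ x, f x * g x ∂μ ≤ (∫ x, f x ^ 2 ∂μ) ^ (1/(2:ℝ)) * (∫ x, g x ^ 2 ∂μ) ^ (1/(2:ℝ)) := this
    _ = _ := by
        rw [Real.sqrt_eq_rpow, Real.sqrt_eq_rpow]

/-- Minkowski inequality (triangle inequality in L²). -/
lemma my_minkowski {f g : α → ℝ} (hf0 : ∀ x, 0 ≤ f x) (hg0 : ∀ x, 0 ≤ g x)
    (hf : Integrable (fun x => f x ^ 2) μ) (hg : Integrable (fun x => g x ^ 2) μ)
    (hfm : AEStronglyMeasurable f μ) (hgm : AEStronglyMeasurable g μ) :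
    Real.sqrt (∫ x, (f x + g x) ^ 2 ∂μ)
      ≤ Real.sqrt (∫ x, f x ^ 2 ∂μ) + Real.sqrt (∫ x, g x ^ 2 ∂μ) := by
  have hA : (0:ℝ) ≤ ∫ x, f x ^ 2 ∂μ := integral_nonneg fun x => sq_nonneg _
  have hB : (0:ℝ) ≤ ∫ x, g x ^ 2 ∂μ := integral_nonneg fun x => sq_nonneg _
  have hmul := my_integrable_mul hf hg hfm hgm
  have hCS := my_cauchy_schwarz hf0 hg0 hf hg hfm hgm
  have hexp : ∀ x, (f x + g x) ^ 2 = f x ^ 2 + 2 * (f x * g x) + g x ^ 2 := fun x => by ring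
  have hint : ∫ x, (f x + g x) ^ 2 ∂μ
      = (∫ x, f x ^ 2 ∂μ) + 2 * (∫ x, f x * g x ∂μ) + ∫ x, g x ^ 2 ∂μ := by
    have i1 : Integrable (fun x => f x ^ 2 + 2 * (f x * g x)) μ := hf.add (hmul.const_mul 2)
    have i2 : ∫ x, (f x ^ 2 + 2 * (f x * g x)) + g x ^ 2 ∂μ
        = (∫ x, f x ^ 2 + 2 * (f x * g x) ∂μ) + ∫ x, g x ^ 2 ∂μ := integral_add i1 hg
    have i3 : ∫ x, f x ^ 2 + 2 * (f x * g x) ∂μ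
        = (∫ x, f x ^ 2 ∂μ) + ∫ x, 2 * (f x * g x) ∂μ := integral_add hf (hmul.const_mul 2)
    simp_rw [hexp]
    rw [i2, i3, MeasureTheory.integral_const_mul]
  have key : ∫ x, (f x + g x) ^ 2 ∂μ
      ≤ (Real.sqrt (∫ x, f x ^ 2 ∂μ) + Real.sqrt (∫ x, g x ^ 2 ∂μ)) ^ 2 := by
    rw [hint, add_sq, Real.sq_sqrt hA, Real.sq_sqrt hB]
    nlinarith [hCS]
  calc Real.sqrt (∫ x, (f x + g x) ^ 2 ∂μ)
      ≤ Real.sqrt ((Real.sqrt (∫ x, f x ^ 2 ∂μ) + Real.sqrt (∫ x, g x ^ 2 ∂μ)) ^ 2) :=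
        Real.sqrt_le_sqrt key
    _ = _ := Real.sqrt_sq (by positivity)

end Aux

section W2Basic

variable {d : ℕ}

local notation "E" => EuclideanSpace ℝ (Fin d)

lemma W2_bddBelow (μ ν : Measure E) :
    BddBelow { r : ℝ |
    ∃ π : Measure (EuclideanSpace ℝ (Fin d) × EuclideanSpace ℝ (Fin d)),
      IsProbabilityMeasure π ∧ π.map Prod.fst = μ ∧ π.map Prod.snd = ν ∧
      r = Real.sqrt (∫ p, ‖p.1 - p.2‖ ^ 2 ∂π) } := by
  refine ⟨0, fun r hr => ?_⟩
  obtain ⟨π, _, _, _, hr⟩ := hr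
  rw [hr]; exact Real.sqrt_nonneg _

lemma W2_nonneg (μ ν : Measure E) : 0 ≤ W2 μ ν := by
  apply Real.sInf_nonneg
  rintro r ⟨π, _, _, _, hr⟩
  rw [hr]; exact Real.sqrt_nonneg _

lemma W2_set_nonempty (μ ν : Measure E)
    [IsProbabilityMeasure μ] [IsProbabilityMeasure ν] :
    Set.Nonempty { r : ℝ |
    ∃ π : Measure (EuclideanSpace ℝ (Fin d) × EuclideanSpace ℝ (Fin d)),
      IsProbabilityMeasure π ∧ π.map Prod.fst = μ ∧ π.map Prod.snd = ν ∧
      r = Real.sqrt (∫ p, ‖p.1 - p.2‖ ^ 2 ∂π) } := by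
  refine ⟨_, ⟨μ.prod ν, inferInstance, ?_, ?_, rfl⟩⟩
  · simp
  · simp

lemma W2_le {μ ν : Measure E}
    (π : Measure (EuclideanSpace ℝ (Fin d) × EuclideanSpace ℝ (Fin d)))
    (hπ : IsProbabilityMeasure π) (h1 : π.map Prod.fst = μ) (h2 : π.map Prod.snd = ν) :
    W2 μ ν ≤ Real.sqrt (∫ p, ‖p.1 - p.2‖ ^ 2 ∂π) :=
  csInf_le (W2_bddBelow μ ν) ⟨π, hπ, h1, h2, rfl⟩

lemma norm_sq_cont : Continuous (fun x : E => ‖x‖ ^ 2) := by fun_prop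

lemma coupling_int_fst {π : Measure (EuclideanSpace ℝ (Fin d) × EuclideanSpace ℝ (Fin d))}
    {μ : Measure E}
    (h1 : π.map Prod.fst = μ) (hμ : Integrable (fun x => ‖x‖ ^ 2) μ) :
    Integrable (fun p : EuclideanSpace ℝ (Fin d) × EuclideanSpace ℝ (Fin d) => ‖p.1‖ ^ 2) π ∧
      (∫ p : EuclideanSpace ℝ (Fin d) × EuclideanSpace ℝ (Fin d), ‖p.1‖ ^ 2 ∂π)
        = ∫ x, ‖x‖ ^ 2 ∂μ := by
  subst h1
  have hm : AEStronglyMeasurable (fun x : E => ‖x‖ ^ 2) (π.map Prod.fst) :=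
    norm_sq_cont.aestronglyMeasurable
  constructor
  · exact (integrable_map_measure hm measurable_fst.aemeasurable).1 hμ
  · exact (integral_map measurable_fst.aemeasurable hm).symm

lemma coupling_int_snd {π : Measure (EuclideanSpace ℝ (Fin d) × EuclideanSpace ℝ (Fin d))}
    {ν : Measure E}
    (h2 : π.map Prod.snd = ν) (hν : Integrable (fun x => ‖x‖ ^ 2) ν) :
    Integrable (fun p : EuclideanSpace ℝ (Fin d) × EuclideanSpace ℝ (Fin d) => ‖p.2‖ ^ 2) π ∧
      (∫ p : EuclideanSpace ℝ (Fin d) × EuclideanSpace ℝ (Fin d), ‖p.2‖ ^ 2 ∂π)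
        = ∫ x, ‖x‖ ^ 2 ∂ν := by
  subst h2
  have hm : AEStronglyMeasurable (fun x : E => ‖x‖ ^ 2) (π.map Prod.snd) :=
    norm_sq_cont.aestronglyMeasurable
  constructor
  · exact (integrable_map_measure hm measurable_snd.aemeasurable).1 hν
  · exact (integral_map measurable_snd.aemeasurable hm).symm

lemma coupling_int_sub {π : Measure (EuclideanSpace ℝ (Fin d) × EuclideanSpace ℝ (Fin d))}
    (hf : Integrable (fun p : EuclideanSpace ℝ (Fin d) × EuclideanSpace ℝ (Fin d) => ‖p.1‖ ^ 2) π)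
    (hg : Integrable (fun p : EuclideanSpace ℝ (Fin d) × EuclideanSpace ℝ (Fin d) => ‖p.2‖ ^ 2) π) :
    Integrable (fun p : EuclideanSpace ℝ (Fin d) × EuclideanSpace ℝ (Fin d)
      => ‖p.1 - p.2‖ ^ 2) π := by
  refine Integrable.mono' ((hf.const_mul 2).add (hg.const_mul 2)) ?_ ?_
  · exact (Continuous.aestronglyMeasurable (by fun_prop))
  · filter_upwards with p
    have h1 := norm_sub_le p.1 p.2
    have := norm_nonneg p.1; have := norm_nonneg p.2; have := norm_nonneg (p.1 - p.2)
    simp only [Pi.add_apply, Real.norm_eq_abs,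
      abs_of_nonneg (by positivity : (0:ℝ) ≤ ‖p.1 - p.2‖ ^ 2)]
    nlinarith [sq_nonneg (‖p.1‖ - ‖p.2‖), mul_self_le_mul_self this h1]

/-- Pointwise estimate for the truncation maps. -/
lemma trunc_pointwise (x y : E) {c c' : ℝ} (hc0 : 0 ≤ c) (hc1 : c ≤ 1) :
    ‖c • x - c' • y‖ ^ 2 ≤ 2 * ‖x - y‖ ^ 2 + 2 * (c - c') ^ 2 * ‖y‖ ^ 2 := by
  have h0 : c • x - c' • y = c • (x - y) + (c - c') • y := by
    rw [smul_sub, sub_smul]; abel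
  have h1 : ‖c • x - c' • y‖ ≤ c * ‖x - y‖ + |c - c'| * ‖y‖ := by
    rw [h0]
    calc ‖c • (x - y) + (c - c') • y‖ ≤ ‖c • (x - y)‖ + ‖(c - c') • y‖ := norm_add_le _ _
      _ = c * ‖x - y‖ + |c - c'| * ‖y‖ := by
          rw [norm_smul, norm_smul, Real.norm_eq_abs, Real.norm_eq_abs, abs_of_nonneg hc0]
  have hxy := norm_nonneg (x - y); have hy := norm_nonneg y
  have hcc := abs_nonneg (c - c')
  have hL := norm_nonneg (c • x - c' • y)
  have hsq : |c - c'| ^ 2 = (c - c') ^ 2 := sq_abs _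
  nlinarith [mul_self_le_mul_self hL h1, sq_nonneg (c * ‖x - y‖ - |c - c'| * ‖y‖),
    mul_nonneg hc0 hxy, mul_nonneg hcc hy, sq_nonneg (‖x - y‖ - |c - c'| * ‖y‖),
    mul_le_one₀ hc1 hc0 hc1]

end W2Basic

section M2dist

variable {d : ℕ}

lemma M2_dist_le {μ ν : Measure (EuclideanSpace ℝ (Fin d))}
    {π : Measure (EuclideanSpace ℝ (Fin d) × EuclideanSpace ℝ (Fin d))}
    (h1 : π.map Prod.fst = μ) (h2 : π.map Prod.snd = ν)
    (hμ : Integrable (fun x => ‖x‖ ^ 2) μ) (hν : Integrable (fun x => ‖x‖ ^ 2) ν) :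
    |M2 μ - M2 ν| ≤ Real.sqrt (∫ p, ‖p.1 - p.2‖ ^ 2 ∂π) := by
  have hint1 := coupling_int_fst h1 hμ
  have hint2 := coupling_int_snd h2 hν
  have hintsub := coupling_int_sub hint1.1 hint2.1
  have hfm : AEStronglyMeasurable
      (fun p : EuclideanSpace ℝ (Fin d) × EuclideanSpace ℝ (Fin d) => ‖p.1 - p.2‖) π :=
    Continuous.aestronglyMeasurable (by fun_prop)
  have h1m : AEStronglyMeasurable
      (fun p : EuclideanSpace ℝ (Fin d) × EuclideanSpace ℝ (Fin d) => ‖p.1‖) π :=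
    Continuous.aestronglyMeasurable (by fun_prop)
  have h2m : AEStronglyMeasurable
      (fun p : EuclideanSpace ℝ (Fin d) × EuclideanSpace ℝ (Fin d) => ‖p.2‖) π :=
    Continuous.aestronglyMeasurable (by fun_prop)
  have e : M2 μ = Real.sqrt (∫ p, ‖p.1‖ ^ 2 ∂π) := by rw [M2, hint1.2]
  have e2 : M2 ν = Real.sqrt (∫ p, ‖p.2‖ ^ 2 ∂π) := by rw [M2, hint2.2]
  have d1 : M2 μ ≤ Real.sqrt (∫ p, ‖p.1 - p.2‖ ^ 2 ∂π) + M2 ν := by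
    have step : (∫ p, ‖p.1‖ ^ 2 ∂π) ≤ ∫ p, (‖p.1 - p.2‖ + ‖p.2‖) ^ 2 ∂π := by
      refine integral_mono_of_nonneg (Filter.Eventually.of_forall fun p => sq_nonneg _)
        (my_integrable_add_sq hintsub hint2.1 hfm h2m)
        (Filter.Eventually.of_forall fun p => ?_)
      have hle : ‖p.1‖ ≤ ‖p.1 - p.2‖ + ‖p.2‖ := by
        calc ‖p.1‖ = ‖(p.1 - p.2) + p.2‖ := by rw [sub_add_cancel]
          _ ≤ _ := norm_add_le _ _
      exact pow_le_pow_left₀ (norm_nonneg _) hle 2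
    have mink := my_minkowski
      (f := fun p : EuclideanSpace ℝ (Fin d) × EuclideanSpace ℝ (Fin d) => ‖p.1 - p.2‖)
      (g := fun p : EuclideanSpace ℝ (Fin d) × EuclideanSpace ℝ (Fin d) => ‖p.2‖)
      (fun p => norm_nonneg _) (fun p => norm_nonneg _) hintsub hint2.1 hfm h2m
    rw [e, e2]
    exact le_trans (Real.sqrt_le_sqrt step) mink
  have d2 : M2 ν ≤ Real.sqrt (∫ p, ‖p.1 - p.2‖ ^ 2 ∂π) + M2 μ := by
    have step : (∫ p, ‖p.2‖ ^ 2 ∂π) ≤ ∫ p, (‖p.1 - p.2‖ + ‖p.1‖) ^ 2 ∂π := by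
      refine integral_mono_of_nonneg (Filter.Eventually.of_forall fun p => sq_nonneg _)
        (my_integrable_add_sq hintsub hint1.1 hfm h1m)
        (Filter.Eventually.of_forall fun p => ?_)
      have hle : ‖p.2‖ ≤ ‖p.1 - p.2‖ + ‖p.1‖ := by
        calc ‖p.2‖ = ‖(p.2 - p.1) + p.1‖ := by rw [sub_add_cancel]
          _ ≤ ‖p.2 - p.1‖ + ‖p.1‖ := norm_add_le _ _
          _ = ‖p.1 - p.2‖ + ‖p.1‖ := by rw [norm_sub_rev]
      exact pow_le_pow_left₀ (norm_nonneg _) hle 2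
    have mink := my_minkowski
      (f := fun p : EuclideanSpace ℝ (Fin d) × EuclideanSpace ℝ (Fin d) => ‖p.1 - p.2‖)
      (g := fun p : EuclideanSpace ℝ (Fin d) × EuclideanSpace ℝ (Fin d) => ‖p.1‖)
      (fun p => norm_nonneg _) (fun p => norm_nonneg _) hintsub hint1.1 hfm h1m
    rw [e, e2]
    exact le_trans (Real.sqrt_le_sqrt step) mink
  exact abs_sub_le_iff.mpr ⟨by linarith, by linarith⟩

end M2dist
section PhiBound

variable {d : ℕ}

lemma W2_phi_le (n : ℕ) (hn : 1 ≤ n) {μ ν : Measure (EuclideanSpace ℝ (Fin d))}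
    {π : Measure (EuclideanSpace ℝ (Fin d) × EuclideanSpace ℝ (Fin d))}
    [IsProbabilityMeasure π]
    (h1 : π.map Prod.fst = μ) (h2 : π.map Prod.snd = ν)
    (hμ : Integrable (fun x => ‖x‖ ^ 2) μ) (hν : Integrable (fun x => ‖x‖ ^ 2) ν) :
    W2 (phi n μ) (phi n ν) ≤ Real.sqrt (2 * (∫ p, ‖p.1 - p.2‖ ^ 2 ∂π)
      + 2 * ((n:ℝ) / max (M2 μ) (n:ℝ) - (n:ℝ) / max (M2 ν) (n:ℝ)) ^ 2 * ∫ x, ‖x‖ ^ 2 ∂ν) := by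
  have hint1 := coupling_int_fst h1 hμ
  have hint2 := coupling_int_snd h2 hν
  have hintsub := coupling_int_sub hint1.1 hint2.1
  set c : ℝ := (n:ℝ) / max (M2 μ) (n:ℝ) with hcdef
  set c0 : ℝ := (n:ℝ) / max (M2 ν) (n:ℝ) with hc0def
  have hnpos : (0:ℝ) < (n:ℝ) := by exact_mod_cast Nat.lt_of_lt_of_le Nat.zero_lt_one hn
  have hcb : 0 ≤ c ∧ c ≤ 1 := by
    have hmax : (n:ℝ) ≤ max (M2 μ) (n:ℝ) := le_max_right _ _
    exact ⟨div_nonneg hnpos.le (le_trans hnpos.le hmax),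
      by rw [hcdef, div_le_one (lt_of_lt_of_le hnpos hmax)]; exact hmax⟩
  set T : EuclideanSpace ℝ (Fin d) × EuclideanSpace ℝ (Fin d) →
      EuclideanSpace ℝ (Fin d) × EuclideanSpace ℝ (Fin d) :=
    fun p => (c • p.1, c0 • p.2) with hTdef
  have hTc : Continuous T := by fun_prop
  haveI hπ' : IsProbabilityMeasure (π.map T) :=
    Measure.isProbabilityMeasure_map hTc.measurable.aemeasurable
  have hfst : (π.map T).map Prod.fst = phi n μ := by
    rw [Measure.map_map measurable_fst hTc.measurable]
    have hco : Prod.fst ∘ T = (fun x => c • x) ∘ Prod.fst := rfl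
    rw [hco, ← Measure.map_map (measurable_const_smul c) measurable_fst, h1]
    rfl
  have hsnd : (π.map T).map Prod.snd = phi n ν := by
    rw [Measure.map_map measurable_snd hTc.measurable]
    have hco : Prod.snd ∘ T = (fun x => c0 • x) ∘ Prod.snd := rfl
    rw [hco, ← Measure.map_map (measurable_const_smul c0) measurable_snd, h2]
    rfl
  have hW := W2_le _ hπ' hfst hsnd
  have hch : (∫ q, ‖q.1 - q.2‖ ^ 2 ∂(π.map T))
      = ∫ p, ‖c • p.1 - c0 • p.2‖ ^ 2 ∂π :=
    integral_map hTc.measurable.aemeasurable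
      (Continuous.aestronglyMeasurable (by fun_prop))
  have hxint : Integrable
      (fun p : EuclideanSpace ℝ (Fin d) × EuclideanSpace ℝ (Fin d) =>
        2 * ‖p.1 - p.2‖ ^ 2 + 2 * (c - c0) ^ 2 * ‖p.2‖ ^ 2) π :=
    (hintsub.const_mul 2).add ((hint2.1).const_mul (2 * (c - c0) ^ 2))
  have hmono : (∫ p, ‖c • p.1 - c0 • p.2‖ ^ 2 ∂π)
      ≤ 2 * (∫ p, ‖p.1 - p.2‖ ^ 2 ∂π) + 2 * (c - c0) ^ 2 * ∫ x, ‖x‖ ^ 2 ∂ν := by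
    have hle := integral_mono_of_nonneg
      (Filter.Eventually.of_forall fun p => sq_nonneg ‖c • p.1 - c0 • p.2‖) hxint
      (Filter.Eventually.of_forall fun p => trunc_pointwise p.1 p.2 hcb.1 hcb.2)
    refine le_trans hle ?_
    rw [integral_add (hintsub.const_mul 2) ((hint2.1).const_mul (2 * (c - c0) ^ 2)),
      MeasureTheory.integral_const_mul, MeasureTheory.integral_const_mul, hint2.2]
  calc W2 (phi n μ) (phi n ν)
      ≤ Real.sqrt (∫ q, ‖q.1 - q.2‖ ^ 2 ∂(π.map T)) := hW
    _ = Real.sqrt (∫ p, ‖c • p.1 - c0 • p.2‖ ^ 2 ∂π) := by rw [hch]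
    _ ≤ _ := Real.sqrt_le_sqrt hmono

end PhiBound
/-- Continuity of the truncation operator `μ ↦ φ_n ∘ μ` on `(𝒫₂(ℝ^d), W₂)`:
if `W₂(μ_k, μ) → 0` then `W₂(φ_n ∘ μ_k, φ_n ∘ μ) → 0`. -/
theorem truncation_continuous_in_wasserstein {d : ℕ} (n : ℕ) (hn : 1 ≤ n)
    (μk : ℕ → Measure (EuclideanSpace ℝ (Fin d)))
    (μ : Measure (EuclideanSpace ℝ (Fin d)))
    (hprob : ∀ k, IsProbabilityMeasure (μk k)) [IsProbabilityMeasure μ]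
    (hmom : ∀ k, Integrable (fun x => ‖x‖ ^ 2) (μk k))
    (hμ : Integrable (fun x => ‖x‖ ^ 2) μ)
    (hconv : Tendsto (fun k => W2 (μk k) μ) atTop (nhds 0)) :
    Tendsto (fun k => W2 (phi n (μk k)) (phi n μ)) atTop (nhds 0) := by
  classical
  -- Step 1: choose near-optimal couplings
  have hchoice : ∀ k : ℕ, ∃ π : Measure (EuclideanSpace ℝ (Fin d) × EuclideanSpace ℝ (Fin d)),
      IsProbabilityMeasure π ∧ π.map Prod.fst = μk k ∧ π.map Prod.snd = μ ∧
      Real.sqrt (∫ p, ‖p.1 - p.2‖ ^ 2 ∂π) < W2 (μk k) μ + 1 / ((k : ℝ) + 1) := by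
    intro k
    haveI := hprob k
    have hne := W2_set_nonempty (μk k) μ
    have hlt : W2 (μk k) μ < W2 (μk k) μ + 1 / ((k : ℝ) + 1) :=
      lt_add_of_pos_right _ (by positivity)
    unfold W2 at hlt
    obtain ⟨r, hrmem, hrlt⟩ := exists_lt_of_csInf_lt hne hlt
    obtain ⟨π, hπp, ha, hb, hr⟩ := hrmem
    exact ⟨π, hπp, ha, hb, hr ▸ hrlt⟩
  choose π hπp h1 h2 h4 using hchoice
  have hEknn : ∀ k, (0:ℝ) ≤ ∫ p, ‖p.1 - p.2‖ ^ 2 ∂(π k) :=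
    fun k => integral_nonneg fun p => sq_nonneg _
  -- Step 2: sqrt Ek → 0 and Ek → 0
  have hsqrtE : Tendsto (fun k => Real.sqrt (∫ p, ‖p.1 - p.2‖ ^ 2 ∂(π k))) atTop (nhds 0) := by
    apply squeeze_zero (fun k => Real.sqrt_nonneg _) (fun k => (h4 k).le)
    have := hconv.add tendsto_one_div_add_atTop_nhds_zero_nat
    simpa using this
  have hE : Tendsto (fun k => ∫ p, ‖p.1 - p.2‖ ^ 2 ∂(π k)) atTop (nhds 0) := by
    have heq : (fun k => ∫ p, ‖p.1 - p.2‖ ^ 2 ∂(π k))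
        = fun k => (Real.sqrt (∫ p, ‖p.1 - p.2‖ ^ 2 ∂(π k))) ^ 2 :=
      funext fun k => (Real.sq_sqrt (hEknn k)).symm
    rw [heq]
    simpa using hsqrtE.pow 2
  -- Step 3: M2 (μk k) → M2 μ, hence the scaling constants converge
  have hM2 : Tendsto (fun k => M2 (μk k)) atTop (nhds (M2 μ)) := by
    rw [tendsto_iff_dist_tendsto_zero]
    refine squeeze_zero (fun k => dist_nonneg) (fun k => ?_) hsqrtE
    rw [Real.dist_eq]
    exact M2_dist_le (h1 k) (h2 k) (hmom k) hμ
  have hnpos : (0:ℝ) < (n:ℝ) := by exact_mod_cast Nat.lt_of_lt_of_le Nat.zero_lt_one hn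
  have hmaxne : max (M2 μ) (n:ℝ) ≠ 0 :=
    ne_of_gt (lt_of_lt_of_le hnpos (le_max_right _ _))
  have hctend : Tendsto (fun k => (n:ℝ) / max (M2 (μk k)) (n:ℝ)) atTop
      (nhds ((n:ℝ) / max (M2 μ) (n:ℝ))) :=
    Tendsto.div tendsto_const_nhds (hM2.max tendsto_const_nhds) hmaxne
  -- Step 4: squeeze
  have hbound : ∀ k, W2 (phi n (μk k)) (phi n μ)
      ≤ Real.sqrt (2 * (∫ p, ‖p.1 - p.2‖ ^ 2 ∂(π k))
        + 2 * ((n:ℝ) / max (M2 (μk k)) (n:ℝ) - (n:ℝ) / max (M2 μ) (n:ℝ)) ^ 2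
          * ∫ x, ‖x‖ ^ 2 ∂μ) := by
    intro k
    haveI := hπp k
    exact W2_phi_le n hn (h1 k) (h2 k) (hmom k) hμ
  have hBtend : Tendsto (fun k => Real.sqrt (2 * (∫ p, ‖p.1 - p.2‖ ^ 2 ∂(π k))
        + 2 * ((n:ℝ) / max (M2 (μk k)) (n:ℝ) - (n:ℝ) / max (M2 μ) (n:ℝ)) ^ 2
          * ∫ x, ‖x‖ ^ 2 ∂μ)) atTop (nhds 0) := by
    have hlin : Tendsto (fun k => 2 * (∫ p, ‖p.1 - p.2‖ ^ 2 ∂(π k))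
        + 2 * ((n:ℝ) / max (M2 (μk k)) (n:ℝ) - (n:ℝ) / max (M2 μ) (n:ℝ)) ^ 2
          * ∫ x, ‖x‖ ^ 2 ∂μ) atTop (nhds 0) := by
      have ht1 := hE.const_mul 2
      have htc : Tendsto (fun k => (n:ℝ) / max (M2 (μk k)) (n:ℝ) - (n:ℝ) / max (M2 μ) (n:ℝ))
          atTop (nhds ((n:ℝ) / max (M2 μ) (n:ℝ) - (n:ℝ) / max (M2 μ) (n:ℝ))) :=
        hctend.sub tendsto_const_nhds
      have ht2 := ((htc.pow 2).const_mul 2).mul_const (∫ x, ‖x‖ ^ 2 ∂μ)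
      simpa using ht1.add ht2
    have := hlin.sqrt
    simpa using this
  exact squeeze_zero (fun k => W2_nonneg _ _) hbound hBtend
end
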